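/- arXiv:cond-mat/0604291 — 4 statements merged into one kernel-verified Lean document; each statement's English description precedes it below -/
import Mathlib

section
/- Let φ : ℝⁿ → ℝⁿ be a bijection, differentiable with differentiable inverse ψ, that is positively homogeneous of degree 1, i.e. φ(αI) = αφ(I) for all α > 0 and all I ∈ ℝⁿ. Let S : ℝⁿ → ℝ be differentiable and set S̃ = S ∘ ψ. Then the Planck thermodynamic potential obtained from the Legendre transformation is invariant under this reparametrization change: for every I ∈ ℝⁿ, ⟨I, ∇S(I)⟩ − S(I) = ⟨φ(I), ∇S̃(φ(I))⟩ − S̃(φ(I)). (Theorem 2: the microcanonical Planck potential P_m = Iᵏ ∂S_B/∂Iᵏ − S_B is invariant under the group of homogeneous transformations.) -/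
open scoped RealInnerProductSpace

lemma inner_gradient_eq {n : ℕ} (f : EuclideanSpace ℝ (Fin n) → ℝ)
    (x v : EuclideanSpace ℝ (Fin n)) : ⟪gradient f x, v⟫ = fderiv ℝ f x v := by
  rw [gradient, InnerProductSpace.toDual_symm_apply]

/-- Theorem 2: the microcanonical Planck thermodynamic potential
`P_m = ⟨I, ∇S(I)⟩ − S(I)` obtained from the Legendre transformation is invariant
under a homogeneous reparametrization change φ (with differentiable inverse ψ),
where the entropy in the new representation is `S̃ = S ∘ ψ`. -/
theorem planck_potential_homogeneous_invariant {n : ℕ}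
    (φ ψ : EuclideanSpace ℝ (Fin n) → EuclideanSpace ℝ (Fin n))
    (hbij : Function.Bijective φ)
    (hφ : Differentiable ℝ φ) (hψ : Differentiable ℝ ψ)
    (hleft : Function.LeftInverse ψ φ) (hright : Function.RightInverse ψ φ)
    (hhom : ∀ α : ℝ, 0 < α → ∀ I, φ (α • I) = α • φ I)
    (S : EuclideanSpace ℝ (Fin n) → ℝ) (hS : Differentiable ℝ S) :
    ∀ I : EuclideanSpace ℝ (Fin n),
      ⟪I, gradient S I⟫ - S I
        = ⟪φ I, gradient (S ∘ ψ) (φ I)⟫ - (S ∘ ψ) (φ I) := by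
  intro I
  set J := φ I with hJ
  have hψJ : ψ J = I := hleft I
  -- ψ is positively homogeneous
  have hψhom : ∀ α : ℝ, 0 < α → ∀ K, ψ (α • K) = α • ψ K := by
    intro α hα K
    apply hbij.injective
    rw [hright, hhom α hα, hright]
  -- Euler: fderiv ψ J J = ψ J
  have hEuler : fderiv ℝ ψ J J = I := by
    have h1 : HasDerivAt (fun t : ℝ => ψ (t • J)) (fderiv ℝ ψ J J) 1 := by
      have hs : HasDerivAt (fun t : ℝ => t • J) J 1 := by
        simpa using (hasDerivAt_id (1:ℝ)).smul_const J
      have := ((hψ ((1:ℝ) • J)).hasFDerivAt).comp_hasDerivAt 1 hs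
      simp only [one_smul] at this
      exact this
    have h2 : HasDerivAt (fun t : ℝ => ψ (t • J)) (ψ J) 1 := by
      have h2' : HasDerivAt (fun t : ℝ => t • ψ J) (ψ J) 1 := by
        simpa using (hasDerivAt_id (1:ℝ)).smul_const (ψ J)
      apply h2'.congr_of_eventuallyEq
      filter_upwards [eventually_gt_nhds (by norm_num : (0:ℝ) < 1)] with t ht
      rw [hψhom t ht]
    rw [h1.unique h2, hψJ]
  -- chain rule
  have hchain : fderiv ℝ (S ∘ ψ) J = (fderiv ℝ S I).comp (fderiv ℝ ψ J) := by
    rw [fderiv_comp J (hS _) (hψ J), hψJ]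
  have key : ⟪J, gradient (S ∘ ψ) J⟫ = ⟪I, gradient S I⟫ := by
    rw [real_inner_comm, inner_gradient_eq, real_inner_comm, inner_gradient_eq,
      hchain]
    simp [hEuler]
  rw [key, Function.comp_apply, hψJ]
end

section
/- Let s : ℝ → ℝ be twice continuously differentiable with s'(ε) > 0 for all ε ∈ ℝ, and suppose there exist ε₁ < ε₂ such that s''(ε) ≥ 0 for all ε ∈ [ε₁, ε₂] and s''(ε) ≤ 0 for all ε ∉ (ε₁, ε₂) (so s is convex in the interval (ε₁, ε₂) and concave elsewhere). Then there exists a strictly increasing, twice continuously differentiable bijection φ : ℝ → ℝ with φ'(ε) > 0 for all ε, such that s ∘ φ⁻¹ : ℝ → ℝ is concave. (Theorem 3: for a system controlled by only one scaling invariant variable, there is a reparametrization change in which the entropy becomes a concave function.) -/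
open Set Filter Function


/-- Theorem 3: let the entropy per particle `s` be C² with `s' > 0`, convex on
an interval `[ε₁, ε₂]` and concave elsewhere. Then there is a reparametrization
change, i.e. a strictly increasing C² bijection `φ : ℝ → ℝ` with `φ' > 0`, such
that the entropy in the new representation `s ∘ φ⁻¹` is a concave function. -/
theorem exists_reparametrization_concave_entropy
    (s : ℝ → ℝ) (hs : ContDiff ℝ 2 s) (hs' : ∀ ε, 0 < deriv s ε)
    (ε₁ ε₂ : ℝ) (h12 : ε₁ < ε₂)
    (hconvex : ∀ ε ∈ Set.Icc ε₁ ε₂, 0 ≤ deriv (deriv s) ε)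
    (hconcave : ∀ ε ∉ Set.Ioo ε₁ ε₂, deriv (deriv s) ε ≤ 0) :
    ∃ φ : ℝ → ℝ, StrictMono φ ∧ Function.Bijective φ ∧ ContDiff ℝ 2 φ ∧
      (∀ ε, 0 < deriv φ ε) ∧
      ConcaveOn ℝ Set.univ (s ∘ Function.invFun φ) := by
  -- basic regularity facts about `s`
  have hsdiff : Differentiable ℝ s := hs.differentiable (by norm_num)
  have hs1 : ContDiff ℝ 1 (deriv s) :=
    ((contDiff_succ_iff_deriv (n := 1)).1 (by exact_mod_cast hs)).2.2
  have hsd_diff : Differentiable ℝ (deriv s) := hs1.differentiable (by norm_num)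
  have hsd_cont : Continuous (deriv s) := hsd_diff.continuous
  have hsdd_cont : Continuous (deriv (deriv s)) := hs1.continuous_deriv le_rfl
  -- choose `M ≥ 1` with `s'' ≤ M * s'` everywhere
  obtain ⟨x₀, hx₀, hx₀max⟩ := isCompact_Icc.exists_isMaxOn (Set.nonempty_Icc.2 h12.le)
    ((hsdd_cont.continuousOn).div (hsd_cont.continuousOn)
      (fun x _ => (hs' x).ne') :
      ContinuousOn (fun ε => deriv (deriv s) ε / deriv s ε) (Set.Icc ε₁ ε₂))
  set M : ℝ := max (deriv (deriv s) x₀ / deriv s x₀) 1 with hMdef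
  have hM1 : (1:ℝ) ≤ M := le_max_right _ _
  have hM0 : (0:ℝ) < M := lt_of_lt_of_le one_pos hM1
  have hM : ∀ ε, deriv (deriv s) ε ≤ M * deriv s ε := by
    intro ε
    by_cases hε : ε ∈ Set.Icc ε₁ ε₂
    · have h2 : deriv (deriv s) ε / deriv s ε ≤ M := (hx₀max hε).trans (le_max_left _ _)
      have := (div_le_iff₀ (hs' ε)).1 h2
      linarith
    · have : ε ∉ Set.Ioo ε₁ ε₂ := fun h => hε (Set.Ioo_subset_Icc_self h)
      exact (hconcave ε this).trans (mul_pos hM0 (hs' ε)).le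
  -- the reparametrization
  set u : ℝ → ℝ := fun ε => Real.exp (M * ε) with hudef
  have hu : ∀ ε, HasDerivAt u (M * u ε) ε := by
    intro ε
    have h1 : HasDerivAt (fun ε : ℝ => M * ε) M ε := by
      simpa using (hasDerivAt_id ε).const_mul M
    simpa [hudef, mul_comm] using h1.exp
  have hu' : deriv u = fun ε => M * u ε := funext fun ε => (hu ε).deriv
  have huC : ContDiff ℝ 2 u := (Real.contDiff_exp.comp (contDiff_const.mul contDiff_id)).of_le
    (by exact_mod_cast le_top)
  have hupos : ∀ ε, 0 < u ε := fun ε => Real.exp_pos _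
  set φ : ℝ → ℝ := fun ε => s ε + u ε with hφdef
  have hφC2 : ContDiff ℝ 2 φ := hs.add huC
  have hφdiff : Differentiable ℝ φ := hφC2.differentiable (by norm_num)
  have hφ' : ∀ ε, deriv φ ε = deriv s ε + M * u ε := by
    intro ε
    rw [hφdef, deriv_fun_add (hsdiff ε) (hu ε).differentiableAt, (hu ε).deriv]
  have hφ'pos : ∀ ε, 0 < deriv φ ε := fun ε => by
    rw [hφ' ε]; exact add_pos (hs' ε) (mul_pos hM0 (hupos ε))
  have hφmono : StrictMono φ := strictMono_of_deriv_pos hφ'pos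
  have hsmono : StrictMono s := strictMono_of_deriv_pos hs'
  -- surjectivity of φ
  have htop : Tendsto φ atTop atTop := by
    have h1 : Tendsto u atTop atTop :=
      Real.tendsto_exp_atTop.comp (tendsto_id.const_mul_atTop hM0)
    have h2 : Tendsto (fun ε => s 0 + u ε) atTop atTop := tendsto_atTop_add_const_left _ _ h1
    refine tendsto_atTop_mono' atTop ?_ h2
    filter_upwards [eventually_ge_atTop (0:ℝ)] with ε hε
    have := hsmono.monotone hε
    simp only [hφdef]; linarith
  have hbot : Tendsto φ atBot atBot := by
    -- on `Iic ε₁`, `s'` is antitone, hence `s ε ≤ s ε₁ + s' ε₁ * (ε - ε₁)`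
    have hanti : AntitoneOn (deriv s) (Set.Iic ε₁) := by
      apply antitoneOn_of_deriv_nonpos (convex_Iic ε₁) hsd_cont.continuousOn
        (hsd_diff.differentiableOn)
      intro x hx
      rw [interior_Iic] at hx
      exact hconcave x (fun h => absurd h.1 (not_lt.2 hx.le))
    have hkey : ∀ ε ≤ ε₁, s ε ≤ s ε₁ + deriv s ε₁ * (ε - ε₁) := by
      intro ε hε
      set g : ℝ → ℝ := fun x => s x - deriv s ε₁ * x with hgdef
      have hg : ∀ x, HasDerivAt g (deriv s x - deriv s ε₁) x := fun x => by
        simpa using (hsdiff x).hasDerivAt.fun_sub ((hasDerivAt_id x).const_mul (deriv s ε₁))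
      have hgmono : MonotoneOn g (Set.Iic ε₁) := by
        apply monotoneOn_of_deriv_nonneg (convex_Iic ε₁)
          (fun x _ => (hg x).continuousAt.continuousWithinAt)
          (fun x _ => (hg x).differentiableAt.differentiableWithinAt)
        intro x hx
        rw [interior_Iic] at hx
        rw [(hg x).deriv, sub_nonneg]
        exact hanti (Set.mem_Iic.2 hx.le) (Set.mem_Iic.2 le_rfl) hx.le
      have := hgmono (Set.mem_Iic.2 hε) (Set.mem_Iic.2 le_rfl) hε
      simp only [hgdef] at this
      linarith
    have h1 : Tendsto (fun ε => s ε₁ + deriv s ε₁ * (ε - ε₁) + u ε₁) atBot atBot := by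
      have : Tendsto (fun ε : ℝ => deriv s ε₁ * (ε - ε₁)) atBot atBot := by
        apply Tendsto.const_mul_atBot (hs' ε₁)
        exact tendsto_atBot_add_const_right _ _ tendsto_id
      have := tendsto_atBot_add_const_left _ (s ε₁) this
      exact tendsto_atBot_add_const_right _ (u ε₁) this
    refine tendsto_atBot_mono' atBot ?_ h1
    filter_upwards [eventually_le_atBot ε₁] with ε hε
    have h2 := hkey ε hε
    have h3 : u ε ≤ u ε₁ := by
      simp only [hudef]
      exact Real.exp_le_exp.2 (mul_le_mul_of_nonneg_left hε hM0.le)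
    simp only [hφdef]; linarith
  have hsurj : Function.Surjective φ := hφdiff.continuous.surjective htop hbot
  have hbij : Function.Bijective φ := ⟨hφmono.injective, hsurj⟩
  -- the inverse function
  set ψ : ℝ → ℝ := Function.invFun φ with hψdef
  have hψright : ∀ y, φ (ψ y) = y := fun y => Function.rightInverse_invFun hsurj y
  have hψeq : ψ = ⇑(StrictMono.orderIsoOfSurjective φ hφmono hsurj).symm := by
    funext y
    apply hφmono.injective
    rw [hψright y]
    exact ((StrictMono.orderIsoOfSurjective φ hφmono hsurj).apply_symm_apply y).symm
  have hψcont : Continuous ψ := by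
    rw [hψeq]
    exact ((StrictMono.orderIsoOfSurjective φ hφmono hsurj).toHomeomorph).symm.continuous
  have hψmono : Monotone ψ := by
    rw [hψeq]
    exact (StrictMono.orderIsoOfSurjective φ hφmono hsurj).symm.monotone
  have hψderiv : ∀ y, HasDerivAt ψ (deriv φ (ψ y))⁻¹ y := by
    intro y
    exact HasDerivAt.of_local_left_inverse hψcont.continuousAt
      ((hφdiff (ψ y)).hasDerivAt) (hφ'pos (ψ y)).ne'
      (Filter.Eventually.of_forall hψright)
  have hgderiv : ∀ y, HasDerivAt (s ∘ ψ) (deriv s (ψ y) * (deriv φ (ψ y))⁻¹) y := by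
    intro y
    exact (hsdiff (ψ y)).hasDerivAt.comp y (hψderiv y)
  -- the ratio `s'/φ'` is antitone
  have hφ'fun : deriv φ = fun ε => deriv s ε + M * u ε := funext hφ'
  have hφ''  : ∀ ε, deriv (deriv φ) ε = deriv (deriv s) ε + M * (M * u ε) := by
    intro ε
    rw [hφ'fun, deriv_fun_add (hsd_diff ε) (((hu ε).const_mul M).differentiableAt),
      ((hu ε).const_mul M).deriv]
  have hφ'diff : Differentiable ℝ (deriv φ) := by
    rw [hφ'fun]
    exact hsd_diff.add ((differentiable_const M).mul fun ε => (hu ε).differentiableAt)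
  have hratio : Antitone (fun ε => deriv s ε / deriv φ ε) := by
    apply antitone_of_deriv_nonpos
    · exact hsd_diff.div hφ'diff fun ε => (hφ'pos ε).ne'
    · intro x
      rw [deriv_fun_div (hsd_diff x) (hφ'diff x) (hφ'pos x).ne']
      apply div_nonpos_of_nonpos_of_nonneg _ (sq_nonneg _)
      rw [hφ' x, hφ'' x]
      have h1 := hM x
      have h2 := hupos x
      have h3 := (hs' x)
      nlinarith [mul_pos hM0 h2]
  -- conclusion
  refine ⟨φ, hφmono, hbij, hφC2, hφ'pos, ?_⟩
  apply AntitoneOn.concaveOn_of_deriv convex_univ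
    (hsdiff.continuous.comp hψcont).continuousOn
  · intro y _
    exact (hgderiv y).differentiableAt.differentiableWithinAt
  · intro a ha b hb hab
    rw [interior_univ] at ha hb
    rw [(hgderiv a).deriv, (hgderiv b).deriv, ← div_eq_mul_inv, ← div_eq_mul_inv]
    exact hratio (hψmono hab)
end

section
/- Let s : ℝ → ℝ be twice continuously differentiable with s'(ε) > 0 for all ε, and let a : ℝ → ℝ be continuous. Define G(ε) = ∫₀^ε a(u)/s'(u) du and φ(ε) = ∫₀^ε s'(t) exp(G(t)) dt. Then φ is strictly increasing and twice continuously differentiable with φ'(ε) = s'(ε) exp(G(ε)) > 0, and for every ε ∈ ℝ the second derivative of s ∘ φ⁻¹ at φ(ε) equals −a(ε)/φ'(ε)². In particular, if a(ε) ≥ 0 for all ε, then s ∘ φ⁻¹ is concave on the interval φ(ℝ). (This is the key construction ∂φ/∂ε = C β(ε) exp(∫ a/β dε), with ∂²s/∂φ² = −(∂ε/∂φ)² a, in the proof of Theorem 3.) -/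
open Topology Filter


/-- The key construction in the proof of Theorem 3: with `β = s' > 0` and a
continuous `a`, setting `G(ε) = ∫₀^ε a/s'` and `φ(ε) = ∫₀^ε s'(t) exp(G(t)) dt`,
the map `φ` is a strictly increasing C² reparametrization with
`φ' = s' exp(G) > 0`, the second derivative of the entropy in the new
representation satisfies `(s ∘ φ⁻¹)''(φ(ε)) = −a(ε)/φ'(ε)²`, and if `a ≥ 0`
then `s ∘ φ⁻¹` is concave on `φ(ℝ)`. -/
theorem reparametrization_construction
    (s a : ℝ → ℝ) (hs : ContDiff ℝ 2 s) (hs' : ∀ ε, 0 < deriv s ε)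
    (ha : Continuous a)
    (G : ℝ → ℝ) (hG : G = fun ε => ∫ u in (0:ℝ)..ε, a u / deriv s u)
    (φ : ℝ → ℝ) (hφ : φ = fun ε => ∫ t in (0:ℝ)..ε, deriv s t * Real.exp (G t)) :
    StrictMono φ ∧ ContDiff ℝ 2 φ ∧
    (∀ ε, deriv φ ε = deriv s ε * Real.exp (G ε) ∧ 0 < deriv φ ε) ∧
    (∀ ε, deriv (deriv (s ∘ Function.invFun φ)) (φ ε) = -(a ε) / (deriv φ ε) ^ 2) ∧
    ((∀ ε, 0 ≤ a ε) → ConcaveOn ℝ (Set.range φ) (s ∘ Function.invFun φ)) := by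
  have hsd : ContDiff ℝ 1 (deriv s) :=
    (contDiff_succ_iff_deriv.mp (show ContDiff ℝ (1 + 1) s from by norm_num; exact hs)).2.2
  have hβc : Continuous (deriv s) := hsd.continuous
  have hβne : ∀ ε, deriv s ε ≠ 0 := fun ε => (hs' ε).ne'
  have hGic : Continuous (fun u => a u / deriv s u) := ha.div hβc hβne
  have hGd : ∀ ε, HasDerivAt G (a ε / deriv s ε) ε := by
    intro ε
    rw [hG]
    exact intervalIntegral.integral_hasDerivAt_right (hGic.intervalIntegrable _ _)
      hGic.aestronglyMeasurable.stronglyMeasurableAtFilter hGic.continuousAt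
  have hGdiff : Differentiable ℝ G := fun ε => (hGd ε).differentiableAt
  have hGcont : Continuous G := hGdiff.continuous
  have hG1 : ContDiff ℝ 1 G := by
    rw [contDiff_one_iff_deriv]
    refine ⟨hGdiff, ?_⟩
    have h : deriv G = fun ε => a ε / deriv s ε := funext fun ε => (hGd ε).deriv
    rw [h]; exact hGic
  set φ' : ℝ → ℝ := fun ε => deriv s ε * Real.exp (G ε) with hφ'def
  have hφ'c : Continuous φ' := hβc.mul (Real.continuous_exp.comp hGcont)
  have hφd : ∀ ε, HasDerivAt φ (φ' ε) ε := by
    intro ε; rw [hφ]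
    exact intervalIntegral.integral_hasDerivAt_right (hφ'c.intervalIntegrable _ _)
      hφ'c.aestronglyMeasurable.stronglyMeasurableAtFilter hφ'c.continuousAt
  have hderφ : deriv φ = φ' := funext fun ε => (hφd ε).deriv
  have hφ'pos : ∀ ε, 0 < φ' ε := fun ε => mul_pos (hs' ε) (Real.exp_pos _)
  have hφ'ne : ∀ ε, φ' ε ≠ 0 := fun ε => (hφ'pos ε).ne'
  have hmono : StrictMono φ :=
    strictMono_of_deriv_pos (fun ε => by rw [hderφ]; exact hφ'pos ε)
  have hinj : Function.Injective φ := hmono.injective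
  set ψ := Function.invFun φ with hψ
  have hlinv : ∀ ε, ψ (φ ε) = ε := fun ε => Function.leftInverse_invFun hinj ε
  have hφcont : Continuous φ := continuous_iff_continuousAt.mpr (fun ε => (hφd ε).continuousAt)
  have hopen : IsOpen (Set.range φ) := by
    rw [isOpen_iff_mem_nhds]
    rintro y ⟨ε, rfl⟩
    have h1 : Set.Ioo (φ (ε - 1)) (φ (ε + 1)) ⊆ Set.range φ :=
      (intermediate_value_Ioo (by linarith : ε - 1 ≤ ε + 1) hφcont.continuousOn).trans
        ((Set.image_subset_range _ _))
    exact Filter.mem_of_superset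
      (Ioo_mem_nhds (hmono (by linarith)) (hmono (by linarith))) h1
  have hrngmem : ∀ ε, Set.range φ ∈ 𝓝 (φ ε) := fun ε => hopen.mem_nhds ⟨ε, rfl⟩
  have hψmono : StrictMonoOn ψ (Set.range φ) := by
    rintro y1 ⟨ε1, rfl⟩ y2 ⟨ε2, rfl⟩ h
    rw [hlinv, hlinv]
    exact hmono.lt_iff_lt.mp h
  have hψcont : ∀ ε, ContinuousAt ψ (φ ε) := by
    intro ε
    have himg : ψ '' Set.range φ = Set.univ :=
      Set.eq_univ_of_forall (fun x => ⟨φ x, ⟨x, rfl⟩, hlinv x⟩)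
    refine hψmono.continuousAt_of_image_mem_nhds (hrngmem ε) ?_
    rw [himg]
    exact Filter.univ_mem
  have hψd : ∀ ε, HasDerivAt ψ (φ' ε)⁻¹ (φ ε) := by
    intro ε
    have hfg : ∀ᶠ y in 𝓝 (φ ε), φ (ψ y) = y := by
      filter_upwards [hrngmem ε] with y hy using Function.invFun_eq hy
    exact HasDerivAt.of_local_left_inverse (hψcont ε)
      (by rw [hlinv]; exact hφd ε) (hφ'ne ε) hfg
  have hsdiff : ∀ ε, HasDerivAt s (deriv s ε) ε :=
    fun ε => ((hs.differentiable (by norm_num)) ε).hasDerivAt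
  have hsψd : ∀ ε, HasDerivAt (s ∘ ψ) (Real.exp (-(G ε))) (φ ε) := by
    intro ε
    have h := HasDerivAt.comp (φ ε) (by rw [hlinv]; exact hsdiff ε) (hψd ε)
    have heq : deriv s ε * (φ' ε)⁻¹ = Real.exp (-(G ε)) := by
      rw [hφ'def, Real.exp_neg]
      simp only []
      rw [mul_inv, ← mul_assoc, mul_inv_cancel₀ (hβne ε), one_mul]
    exact heq ▸ h
  have hderψ : ∀ y ∈ Set.range φ, deriv (s ∘ ψ) y = Real.exp (-(G (ψ y))) := by
    rintro y ⟨ε, rfl⟩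
    rw [hlinv]
    exact (hsψd ε).deriv
  have hsnd : ∀ ε, deriv (deriv (s ∘ ψ)) (φ ε) = -(a ε) / (deriv φ ε) ^ 2 := by
    intro ε
    have hev : deriv (s ∘ ψ) =ᶠ[𝓝 (φ ε)] fun y => Real.exp (-(G (ψ y))) := by
      filter_upwards [hrngmem ε] with y hy using hderψ y hy
    have h1 : HasDerivAt (fun x => Real.exp (-(G x)))
        (Real.exp (-(G ε)) * (-(a ε / deriv s ε))) ε := ((hGd ε).neg).exp
    have h2 := HasDerivAt.comp (φ ε) (by rw [hlinv]; exact h1) (hψd ε)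
    have h3 : HasDerivAt (fun y => Real.exp (-G (ψ y)))
        (Real.exp (-G ε) * -(a ε / deriv s ε) * (φ' ε)⁻¹) (φ ε) := h2
    rw [hev.deriv_eq, h3.deriv, hderφ]
    have hx := Real.exp_ne_zero (G ε)
    rw [hφ'def]
    simp only []
    rw [Real.exp_neg]
    field_simp
  have hφC2 : ContDiff ℝ 2 φ := by
    rw [show (2 : WithTop ℕ∞) = 1 + 1 from rfl, contDiff_succ_iff_deriv]
    refine ⟨fun ε => (hφd ε).differentiableAt, by simp, ?_⟩
    rw [hderφ]
    exact hsd.mul (Real.contDiff_exp.comp hG1)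
  refine ⟨hmono, hφC2, fun ε => ⟨by rw [hderφ], by rw [hderφ]; exact hφ'pos ε⟩, hsnd, ?_⟩
  intro hpos
  have hGmono : Monotone G :=
    monotone_of_deriv_nonneg hGdiff (fun x => by
      rw [(hGd x).deriv]; exact div_nonneg (hpos x) (hs' x).le)
  have hconv : Convex ℝ (Set.range φ) := by
    rw [convex_iff_ordConnected]
    exact (isPreconnected_range hφcont).ordConnected
  refine AntitoneOn.concaveOn_of_deriv hconv ?_ ?_ ?_
  · rintro y ⟨ε, rfl⟩
    exact (hsψd ε).continuousAt.continuousWithinAt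
  · rw [hopen.interior_eq]
    rintro y ⟨ε, rfl⟩
    exact (hsψd ε).differentiableAt.differentiableWithinAt
  · rw [hopen.interior_eq]
    rintro y1 ⟨ε1, rfl⟩ y2 ⟨ε2, rfl⟩ h
    rw [hderψ _ ⟨ε1, rfl⟩, hderψ _ ⟨ε2, rfl⟩, hlinv, hlinv]
    exact Real.exp_le_exp.mpr (neg_le_neg (hGmono (hmono.le_iff_le.mp h)))
end

section
/- Let a < b be real numbers, s : ℝ → ℝ be continuous on [a, b], and β ∈ ℝ. Then the limit as N → ∞ (N ranging over the natural numbers) of −(1/N) · ln( ∫_a^b exp(−N (β x − s(x))) dx ) equals the minimum over x ∈ [a, b] of β x − s(x). (Equivalence in the thermodynamic limit between the canonical Planck thermodynamic potential per particle, P(β, N) = −ln Z(β, N), and the microcanonical Legendre transform P_m(β) = min_i (β i − s(i)) of the entropy per particle s.) -/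
open MeasureTheory

/-- Equivalence in the thermodynamic limit between the canonical Planck
potential per particle `−(1/N) ln Z(β,N)`, with
`Z(β,N) = ∫_a^b exp(−N(βx − s(x))) dx`, and the microcanonical Legendre
transform `P_m(β) = min_{x ∈ [a,b]} (βx − s(x))` of the entropy per particle. -/
theorem planck_potential_thermodynamic_limit
    (a b : ℝ) (hab : a < b) (s : ℝ → ℝ) (hs : ContinuousOn s (Set.Icc a b))
    (β : ℝ) :
    Filter.Tendsto
      (fun N : ℕ =>
        -((1 / (N : ℝ)) *
          Real.log (∫ x in Set.Icc a b, Real.exp (-((N : ℝ) * (β * x - s x))))))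
      Filter.atTop
      (nhds (sInf ((fun x => β * x - s x) '' Set.Icc a b))) := by
  set f : ℝ → ℝ := fun x => β * x - s x with hf_def
  have hf : ContinuousOn f (Set.Icc a b) :=
    ((continuous_const.mul continuous_id).continuousOn).sub hs
  have hne : (Set.Icc a b).Nonempty := ⟨a, by simp [hab.le]⟩
  obtain ⟨x₀, hx₀, hmin⟩ := isCompact_Icc.exists_isMinOn hne hf
  obtain ⟨x₁, hx₁, hmax⟩ := isCompact_Icc.exists_isMaxOn hne hf
  have hsInf : sInf (f '' Set.Icc a b) = f x₀ :=
    IsLeast.csInf_eq ⟨Set.mem_image_of_mem f hx₀, by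
      rintro y ⟨x, hx, rfl⟩; exact hmin hx⟩
  rw [show ((fun x => β * x - s x) '' Set.Icc a b) = f '' Set.Icc a b from rfl, hsInf]
  set m := f x₀ with hm
  set I : ℕ → ℝ := fun n => ∫ x in Set.Icc a b, Real.exp (-((n : ℝ) * f x)) with hI
  have hba : (0:ℝ) < b - a := by linarith
  have hint : ∀ n : ℕ, IntegrableOn (fun x => Real.exp (-((n:ℝ) * f x))) (Set.Icc a b) := by
    intro n
    exact (Real.continuous_exp.comp_continuousOn
      ((continuousOn_const.mul hf).neg)).integrableOn_Icc
  have hconstint : ∀ (c d C : ℝ), ∫ _ in Set.Icc c d, C = ((volume (Set.Icc c d)).toReal) * C := by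
    intro c d C
    simp [setIntegral_const, smul_eq_mul]
    left; rw [ENNReal.toReal_ofReal']
  have hvol : ∀ (c d : ℝ), c ≤ d → (volume (Set.Icc c d)).toReal = d - c := by
    intro c d h
    rw [Real.volume_Icc, ENNReal.toReal_ofReal (by linarith)]
  -- global lower bound
  have hIlb : ∀ n : ℕ, (b - a) * Real.exp (-((n:ℝ) * f x₁)) ≤ I n := by
    intro n
    have h1 : ∫ _ in Set.Icc a b, Real.exp (-((n:ℝ) * f x₁)) ≤ I n := by
      apply setIntegral_mono_on (integrableOn_const (ne_of_lt (by
        rw [Real.volume_Icc]; exact ENNReal.ofReal_lt_top))) (hint n) measurableSet_Icc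
      intro x hx
      have : (n:ℝ) * f x ≤ (n:ℝ) * f x₁ :=
        mul_le_mul_of_nonneg_left (hmax hx) (Nat.cast_nonneg n)
      exact Real.exp_le_exp.2 (by linarith)
    calc (b - a) * Real.exp (-((n:ℝ) * f x₁))
        = ∫ _ in Set.Icc a b, Real.exp (-((n:ℝ) * f x₁)) := by
          rw [hconstint, hvol a b hab.le]
      _ ≤ I n := h1
  have hIpos : ∀ n : ℕ, 0 < I n := fun n =>
    lt_of_lt_of_le (by positivity) (hIlb n)
  -- global upper bound
  have hIub : ∀ n : ℕ, I n ≤ (b - a) * Real.exp (-((n:ℝ) * m)) := by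
    intro n
    have h1 : I n ≤ ∫ _ in Set.Icc a b, Real.exp (-((n:ℝ) * m)) := by
      apply setIntegral_mono_on (hint n) (integrableOn_const (ne_of_lt (by
        rw [Real.volume_Icc]; exact ENNReal.ofReal_lt_top))) measurableSet_Icc
      intro x hx
      have : (n:ℝ) * m ≤ (n:ℝ) * f x :=
        mul_le_mul_of_nonneg_left (hmin hx) (Nat.cast_nonneg n)
      exact Real.exp_le_exp.2 (by linarith)
    calc I n ≤ ∫ _ in Set.Icc a b, Real.exp (-((n:ℝ) * m)) := h1
      _ = (b - a) * Real.exp (-((n:ℝ) * m)) := by rw [hconstint, hvol a b hab.le]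
  -- main limit
  rw [Metric.tendsto_atTop]
  intro ε hε
  -- continuity at x₀ gives a small interval where f ≤ m + ε/2
  obtain ⟨δ, hδ, hδf⟩ := Metric.continuousWithinAt_iff.1 (hf x₀ hx₀) (ε/2) (by positivity)
  set c : ℝ := max a (x₀ - δ/2) with hc
  set d : ℝ := min b (x₀ + δ/2) with hd
  have hax₀ : a ≤ x₀ := hx₀.1
  have hx₀b : x₀ ≤ b := hx₀.2
  have hcd : c < d :=
    lt_min (max_lt hab (by linarith)) (max_lt (by linarith) (by linarith))
  have hsub : Set.Icc c d ⊆ Set.Icc a b := by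
    intro x hx
    exact ⟨le_trans (le_max_left _ _) hx.1, le_trans hx.2 (min_le_left _ _)⟩
  have hfsmall : ∀ x ∈ Set.Icc c d, f x ≤ m + ε/2 := by
    intro x hx
    have h1 : x₀ - δ/2 ≤ x := le_trans (le_max_right _ _) hx.1
    have h2 : x ≤ x₀ + δ/2 := hx.2.trans (min_le_right _ _)
    have hdist : dist x x₀ < δ := by
      rw [Real.dist_eq, abs_lt]; constructor <;> linarith
    have := hδf (hsub hx) hdist
    rw [Real.dist_eq, abs_lt] at this
    linarith [this.2]
  -- local lower bound
  have hIlb2 : ∀ n : ℕ, (d - c) * Real.exp (-((n:ℝ) * (m + ε/2))) ≤ I n := by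
    intro n
    have h1 : ∫ _ in Set.Icc c d, Real.exp (-((n:ℝ) * (m + ε/2)))
        ≤ ∫ x in Set.Icc c d, Real.exp (-((n:ℝ) * f x)) := by
      apply setIntegral_mono_on (integrableOn_const (ne_of_lt (by
        rw [Real.volume_Icc]; exact ENNReal.ofReal_lt_top)))
        ((hint n).mono_set hsub) measurableSet_Icc
      intro x hx
      have : (n:ℝ) * f x ≤ (n:ℝ) * (m + ε/2) :=
        mul_le_mul_of_nonneg_left (hfsmall x hx) (Nat.cast_nonneg n)
      exact Real.exp_le_exp.2 (by linarith)
    have h2 : ∫ x in Set.Icc c d, Real.exp (-((n:ℝ) * f x)) ≤ I n := by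
      apply setIntegral_mono_set (hint n)
      · exact Filter.Eventually.of_forall fun x => (Real.exp_pos _).le
      · exact HasSubset.Subset.eventuallyLE hsub
    calc (d - c) * Real.exp (-((n:ℝ) * (m + ε/2)))
        = ∫ _ in Set.Icc c d, Real.exp (-((n:ℝ) * (m + ε/2))) := by
          rw [hconstint, hvol c d hcd.le]
      _ ≤ I n := h1.trans h2
  -- choose N₀
  set K : ℝ := |Real.log (b - a)| + 2 * |Real.log (d - c)| with hK
  have hK0 : 0 ≤ K := by positivity
  refine ⟨⌈K / ε⌉₊ + 1, fun n hn => ?_⟩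
  have hn1 : 1 ≤ n := le_trans (Nat.le_add_left 1 _) hn
  have hnR : (0:ℝ) < n := by exact_mod_cast hn1
  have hnK : K < ε * n := by
    have h1 : K / ε < n := by
      calc K / ε ≤ ⌈K / ε⌉₊ := Nat.le_ceil _
        _ < (⌈K / ε⌉₊ + 1 : ℕ) := by exact_mod_cast Nat.lt_succ_self _
        _ ≤ n := by exact_mod_cast hn
    calc K = (K / ε) * ε := by field_simp
      _ < n * ε := by exact mul_lt_mul_of_pos_right h1 hε
      _ = ε * n := mul_comm _ _
  have hlog1 : Real.log (I n) ≤ Real.log (b - a) + (-((n:ℝ) * m)) := by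
    calc Real.log (I n) ≤ Real.log ((b - a) * Real.exp (-((n:ℝ) * m))) :=
          Real.log_le_log (hIpos n) (hIub n)
      _ = Real.log (b - a) + (-((n:ℝ) * m)) := by
          rw [Real.log_mul (ne_of_gt hba) (Real.exp_ne_zero _), Real.log_exp]
  have hlog2 : Real.log (d - c) + (-((n:ℝ) * (m + ε/2))) ≤ Real.log (I n) := by
    calc Real.log (d - c) + (-((n:ℝ) * (m + ε/2)))
        = Real.log ((d - c) * Real.exp (-((n:ℝ) * (m + ε/2)))) := by
          rw [Real.log_mul (ne_of_gt (by linarith)) (Real.exp_ne_zero _), Real.log_exp]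
      _ ≤ Real.log (I n) := Real.log_le_log (mul_pos (by linarith) (Real.exp_pos _)) (hIlb2 n)
  rw [Real.dist_eq, abs_lt]
  have hinv : (0:ℝ) < 1 / (n:ℝ) := by positivity
  have hcancel : (1 / (n:ℝ)) * n = 1 := by field_simp
  have hKb : Real.log (b - a) ≤ K := by
    have h1 := le_abs_self (Real.log (b - a))
    have h2 : (0:ℝ) ≤ |Real.log (d - c)| := abs_nonneg _
    rw [hK]; linarith
  have hKc : -Real.log (d - c) ≤ K / 2 := by
    have h1 := neg_abs_le (Real.log (d - c))
    have h2 : (0:ℝ) ≤ |Real.log (b - a)| := abs_nonneg _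
    rw [hK]; linarith
  have e1 : (1/(n:ℝ)) * Real.log (I n) ≤ (1/(n:ℝ)) * Real.log (b - a) - m := by
    have h := mul_le_mul_of_nonneg_left hlog1 hinv.le
    have heq : (1/(n:ℝ)) * (Real.log (b - a) + (-((n:ℝ) * m)))
        = (1/(n:ℝ)) * Real.log (b - a) - m := by field_simp; ring
    linarith
  have e2 : (1/(n:ℝ)) * Real.log (d - c) - (m + ε/2) ≤ (1/(n:ℝ)) * Real.log (I n) := by
    have h := mul_le_mul_of_nonneg_left hlog2 hinv.le
    have heq : (1/(n:ℝ)) * (Real.log (d - c) + (-((n:ℝ) * (m + ε/2))))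
        = (1/(n:ℝ)) * Real.log (d - c) - (m + ε/2) := by field_simp; ring
    linarith
  have e3 : (1/(n:ℝ)) * K < ε := by
    have h := mul_lt_mul_of_pos_left hnK hinv
    have heq : (1/(n:ℝ)) * (ε * n) = ε := by field_simp
    linarith
  have e4 : (1/(n:ℝ)) * Real.log (b - a) ≤ (1/(n:ℝ)) * K :=
    mul_le_mul_of_nonneg_left hKb hinv.le
  have e5 : -((1/(n:ℝ)) * Real.log (d - c)) ≤ (1/(n:ℝ)) * (K/2) := by
    have h := mul_le_mul_of_nonneg_left hKc hinv.le
    linarith [h]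
  have e6 : (1/(n:ℝ)) * (K/2) = ((1/(n:ℝ)) * K)/2 := by ring
  constructor
  · linarith
  · linarith
end
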